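/- Let m be a natural number and let F : (ℝ^m) × ℝ → ℝ be continuously differentiable. Let a : ℝ → ℝ^m be continuous on [0,1] and assume that for every t ∈ [0,1] the derivative of the map x ↦ F(x, t) at the point a(t) is zero. Assume moreover that F has no critical point with time coordinate in [0,1], i.e. for every x ∈ ℝ^m and every t ∈ [0,1] the total derivative of F at (x, t) is nonzero. Write ∂_t F(x, t) for the derivative of s ↦ F(x, s) at s = t. Then either ∂_t F(a(t), t) > 0 for every t ∈ [0,1], or ∂_t F(a(t), t) < 0 for every t ∈ [0,1]; in particular the sign of ∂_t F(a(t), t) equals the sign of ∂_t F(a(0), 0) for all t ∈ [0,1]. -/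

import Mathlib

open Set

private lemma deriv_slice {m : ℕ} {F : (Fin m → ℝ) × ℝ → ℝ} (hF : ContDiff ℝ 1 F)
    (x : Fin m → ℝ) (t : ℝ) :
    deriv (fun s => F (x, s)) t = fderiv ℝ F (x, t) (0, 1) := by
  have hc : HasDerivAt (fun s : ℝ => ((x, s) : (Fin m → ℝ) × ℝ)) ((0 : Fin m → ℝ), (1 : ℝ)) t :=
    (hasDerivAt_const t x).prodMk (hasDerivAt_id t)
  have := ((hF.differentiable one_ne_zero (x, t)).hasFDerivAt).comp_hasDerivAt t hc
  exact this.deriv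

/-- Lemma `fate` (Section 2): along a continuous path `t ↦ a t` of critical points of
the slices `x ↦ F (x, t)` of a `C¹` function `F` with no critical point over `[0, 1]`,
the time derivative `∂ₜF (a t, t)` keeps a constant sign; in particular its sign
equals its sign at `t = 0`. -/
theorem lemma_fate (m : ℕ) (F : (Fin m → ℝ) × ℝ → ℝ) (hF : ContDiff ℝ 1 F)
    (a : ℝ → (Fin m → ℝ)) (ha : ContinuousOn a (Icc 0 1))
    (hcrit : ∀ t ∈ Icc (0 : ℝ) 1, fderiv ℝ (fun x => F (x, t)) (a t) = 0)
    (hnoncrit : ∀ (x : Fin m → ℝ), ∀ t ∈ Icc (0 : ℝ) 1, fderiv ℝ F (x, t) ≠ 0) :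
    ((∀ t ∈ Icc (0 : ℝ) 1, 0 < deriv (fun s => F (a t, s)) t) ∨
      (∀ t ∈ Icc (0 : ℝ) 1, deriv (fun s => F (a t, s)) t < 0)) ∧
    (∀ t ∈ Icc (0 : ℝ) 1,
      Real.sign (deriv (fun s => F (a t, s)) t) =
        Real.sign (deriv (fun s => F (a 0, s)) 0)) := by
  set g : ℝ → ℝ := fun t => fderiv ℝ F (a t, t) (0, 1) with hg
  have hderiv : ∀ t ∈ Icc (0 : ℝ) 1, deriv (fun s => F (a t, s)) t = g t := by
    intro t _
    exact deriv_slice hF (a t) t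
  -- nonvanishing of g on [0,1]
  have hne : ∀ t ∈ Icc (0 : ℝ) 1, g t ≠ 0 := by
    intro t ht hzero
    apply hnoncrit (a t) t ht
    set L := fderiv ℝ F (a t, t) with hL
    -- slice derivative : L ∘ inl = fderiv of slice = 0
    have hslice : fderiv ℝ (fun x => F (x, t)) (a t) =
        L.comp (ContinuousLinearMap.inl ℝ (Fin m → ℝ) ℝ) := by
      have hc : HasFDerivAt (fun x : Fin m → ℝ => ((x, t) : (Fin m → ℝ) × ℝ))
          (ContinuousLinearMap.inl ℝ (Fin m → ℝ) ℝ) (a t) :=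
        (hasFDerivAt_id (a t)).prodMk (hasFDerivAt_const t (a t))
      exact (((hF.differentiable one_ne_zero (a t, t)).hasFDerivAt).comp (a t) hc).fderiv
    have hinl : ∀ x : Fin m → ℝ, L (x, 0) = 0 := by
      intro x
      have := hcrit t ht
      rw [hslice] at this
      have := DFunLike.congr_fun this x
      simpa using this
    refine ContinuousLinearMap.ext fun p => ?_
    obtain ⟨x, s⟩ := p
    have hdecomp : ((x, s) : (Fin m → ℝ) × ℝ) = (x, 0) + s • ((0 : Fin m → ℝ), (1 : ℝ)) := by
      simp [Prod.ext_iff]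
    have h01 : L ((0 : Fin m → ℝ), (1 : ℝ)) = 0 := hzero
    rw [hdecomp, map_add, map_smul, hinl x, h01]
    simp
  -- continuity of g on [0,1]
  have hgc : ContinuousOn g (Icc 0 1) := by
    have h1 : Continuous (fderiv ℝ F) := hF.continuous_fderiv one_ne_zero
    have h2 : ContinuousOn (fun t : ℝ => ((a t, t) : (Fin m → ℝ) × ℝ)) (Icc 0 1) :=
      ha.prodMk continuousOn_id
    exact (h1.comp_continuousOn h2).clm_apply continuousOn_const
  -- constant sign via IVT
  have h0 : (0 : ℝ) ∈ Icc (0 : ℝ) 1 := ⟨le_refl 0, zero_le_one⟩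
  have key : (∀ t ∈ Icc (0 : ℝ) 1, 0 < g t) ∨ (∀ t ∈ Icc (0 : ℝ) 1, g t < 0) := by
    rcases (hne 0 h0).lt_or_gt with hneg | hpos
    · right
      intro t ht
      by_contra hle
      have hpos : 0 < g t := lt_of_le_of_ne (not_lt.mp hle) (Ne.symm (hne t ht))
      have : (0 : ℝ) ∈ g '' Icc 0 1 :=
        isPreconnected_Icc.intermediate_value h0 ht hgc ⟨hneg.le, hpos.le⟩
      rcases this with ⟨c, hc, hgc0⟩
      exact hne c hc hgc0
    · left
      intro t ht
      by_contra hle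
      have hneg : g t < 0 := lt_of_le_of_ne (not_lt.mp hle) (hne t ht)
      have : (0 : ℝ) ∈ g '' Icc 0 1 :=
        isPreconnected_Icc.intermediate_value ht h0 hgc ⟨hneg.le, hpos.le⟩
      rcases this with ⟨c, hc, hgc0⟩
      exact hne c hc hgc0
  constructor
  · rcases key with h | h
    · left; intro t ht; rw [hderiv t ht]; exact h t ht
    · right; intro t ht; rw [hderiv t ht]; exact h t ht
  · intro t ht
    rw [hderiv t ht, hderiv 0 h0]
    rcases key with h | h
    · rw [Real.sign_of_pos (h t ht), Real.sign_of_pos (h 0 h0)]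
    · rw [Real.sign_of_neg (h t ht), Real.sign_of_neg (h 0 h0)]
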